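/- X is K-reduced if and only if its complexification Y = X_ℂ is G-reduced, where G = K_ℂ acts on V = W ⊗_ℝ ℂ. -/

import Mathlib

/-!
Common framework: a "compact Lie group / complex reductive group acting on a
finite-dimensional module" is modelled as a subgroup of invertible `n × n`
matrices over `𝕜 = ℝ` or `ℂ` acting on `Fin n → 𝕜` by `Matrix.mulVec`.
Polynomial functions on the module are `MvPolynomial (Fin n) 𝕜`.
-/

set_option synthInstance.maxHeartbeats 1000000
set_option maxHeartbeats 1000000

noncomputable section

open MvPolynomial

namespace ZPaper

variable (𝕜 : Type) [RCLike 𝕜] (n : ℕ)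

/-- The zero set of a family of polynomials. -/
def zeroSet (S : Set (MvPolynomial (Fin n) 𝕜)) : Set (Fin n → 𝕜) :=
  {v | ∀ p ∈ S, eval v p = 0}

/-- A subset of `𝕜ⁿ` is algebraic if it is the zero set of a family of polynomials. -/
def IsAlgebraicSet (X : Set (Fin n → 𝕜)) : Prop :=
  ∃ S : Set (MvPolynomial (Fin n) 𝕜), X = zeroSet 𝕜 n S

/-- The vanishing ideal `I(X)` of a subset `X ⊆ 𝕜ⁿ`. -/
def vanishingIdeal (X : Set (Fin n → 𝕜)) : Ideal (MvPolynomial (Fin n) 𝕜) where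
  carrier := {p | ∀ x ∈ X, eval x p = 0}
  zero_mem' := by intro x _; simp
  add_mem' := by intro a b ha hb x hx; simp [ha x hx, hb x hx]
  smul_mem' := by intro c p hp x hx; simp [smul_eq_mul, hp x hx]

/-- The Zariski closure of a subset of `𝕜ⁿ`. -/
def zclosure (A : Set (Fin n → 𝕜)) : Set (Fin n → 𝕜) :=
  zeroSet 𝕜 n (vanishingIdeal 𝕜 n A : Set (MvPolynomial (Fin n) 𝕜))

/-- `A` is Zariski dense in `X`: every polynomial vanishing on `A` vanishes on `X`. -/
def ZDenseIn (A X : Set (Fin n → 𝕜)) : Prop :=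
  ∀ p : MvPolynomial (Fin n) 𝕜, (∀ a ∈ A, eval a p = 0) → ∀ x ∈ X, eval x p = 0

/-- A set of matrices is a subgroup of `GL_n(𝕜)`. -/
def IsMatSubgroup (G : Set (Matrix (Fin n) (Fin n) 𝕜)) : Prop :=
  (1 : Matrix (Fin n) (Fin n) 𝕜) ∈ G ∧ (∀ a ∈ G, ∀ b ∈ G, a * b ∈ G) ∧
    ∀ a ∈ G, IsUnit a ∧ a⁻¹ ∈ G

/-- `X` is a `G`-stable subset of `𝕜ⁿ`. -/
def Stabilizes (G : Set (Matrix (Fin n) (Fin n) 𝕜)) (X : Set (Fin n → 𝕜)) : Prop :=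
  ∀ g ∈ G, ∀ x ∈ X, Matrix.mulVec g x ∈ X

/-- A polynomial is `G`-invariant. -/
def Invariant (G : Set (Matrix (Fin n) (Fin n) 𝕜)) (p : MvPolynomial (Fin n) 𝕜) : Prop :=
  ∀ g ∈ G, ∀ v : Fin n → 𝕜, eval (Matrix.mulVec g v) p = eval v p

/-- `I_G(X)`: the ideal generated by the `G`-invariant polynomials vanishing on `X`,
i.e. by `I(X)^G = I(X) ∩ 𝕜[V]^G`. -/
def invariantIdeal (G : Set (Matrix (Fin n) (Fin n) 𝕜)) (X : Set (Fin n → 𝕜)) :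
    Ideal (MvPolynomial (Fin n) 𝕜) :=
  Ideal.span {p | Invariant 𝕜 n G p ∧ ∀ x ∈ X, eval x p = 0}

/-- `X` is `G`-reduced: `I_G(X) = I(X)`. -/
def IsGReduced (G : Set (Matrix (Fin n) (Fin n) 𝕜)) (X : Set (Fin n → 𝕜)) : Prop :=
  invariantIdeal 𝕜 n G X = vanishingIdeal 𝕜 n X

/-- `X` is almost `G`-reduced: `√I_G(X) = I(X)`. -/
def IsAlmostGReduced (G : Set (Matrix (Fin n) (Fin n) 𝕜)) (X : Set (Fin n → 𝕜)) : Prop :=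
  (invariantIdeal 𝕜 n G X).radical = vanishingIdeal 𝕜 n X

/-- The orbit `G·v`. -/
def orbit (G : Set (Matrix (Fin n) (Fin n) 𝕜)) (v : Fin n → 𝕜) : Set (Fin n → 𝕜) :=
  (fun g => Matrix.mulVec g v) '' G

/-- The isotropy group `G_v`. -/
def isotropy (G : Set (Matrix (Fin n) (Fin n) 𝕜)) (v : Fin n → 𝕜) :
    Set (Matrix (Fin n) (Fin n) 𝕜) :=
  {g ∈ G | Matrix.mulVec g v = v}

/-- Matrix exponential. -/
def mexp (A : Matrix (Fin n) (Fin n) 𝕜) : Matrix (Fin n) (Fin n) 𝕜 :=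
  ∑' k : ℕ, ((k.factorial : 𝕜)⁻¹) • A ^ k

/-- The Lie algebra of a matrix group: matrices whose one-parameter subgroup lies in `G`. -/
def lieAlgebra (G : Set (Matrix (Fin n) (Fin n) 𝕜)) : Set (Matrix (Fin n) (Fin n) 𝕜) :=
  {A | ∀ t : 𝕜, mexp 𝕜 n (t • A) ∈ G}

/-- The tangent space `T_v(G·v)` to the orbit, i.e. `𝔤·v`. -/
def orbitTangent (G : Set (Matrix (Fin n) (Fin n) 𝕜)) (v : Fin n → 𝕜) :
    Submodule 𝕜 (Fin n → 𝕜) :=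
  Submodule.span 𝕜 ((fun A => Matrix.mulVec A v) '' lieAlgebra 𝕜 n G)

/-- `N` is a `G_v`-stable complement to `T_v(G·v)` in `𝕜ⁿ` (a slice at `v`). -/
def IsSliceComplement (G : Set (Matrix (Fin n) (Fin n) 𝕜)) (v : Fin n → 𝕜)
    (N : Submodule 𝕜 (Fin n → 𝕜)) : Prop :=
  IsCompl (orbitTangent 𝕜 n G v) N ∧
    ∀ g ∈ isotropy 𝕜 n G v, ∀ x ∈ N, Matrix.mulVec g x ∈ N

/-- The image of `H` in `GL(N)` is trivial. -/
def ActsTriviallyOn (H : Set (Matrix (Fin n) (Fin n) 𝕜))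
    (N : Submodule 𝕜 (Fin n → 𝕜)) : Prop :=
  ∀ g ∈ H, ∀ x ∈ N, Matrix.mulVec g x = x

/-- The image of `H` in `GL(N)` is finite. -/
def HasFiniteImageOn (H : Set (Matrix (Fin n) (Fin n) 𝕜))
    (N : Submodule 𝕜 (Fin n → 𝕜)) : Prop :=
  Set.Finite ((fun g => fun x : N => Matrix.mulVec g (x : Fin n → 𝕜)) '' H)

/-- The orbit `G·v` is (Zariski) closed. -/
def HasClosedOrbit (G : Set (Matrix (Fin n) (Fin n) 𝕜)) (v : Fin n → 𝕜) : Prop :=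
  zclosure 𝕜 n (orbit 𝕜 n G v) ⊆ orbit 𝕜 n G v

/-- `v` lies on a principal orbit: `G·v` is closed and the isotropy group acts trivially on
some (hence any) slice at `v`. -/
def IsPrincipalPt (G : Set (Matrix (Fin n) (Fin n) 𝕜)) (v : Fin n → 𝕜) : Prop :=
  HasClosedOrbit 𝕜 n G v ∧
    ∃ N, IsSliceComplement 𝕜 n G v N ∧ ActsTriviallyOn 𝕜 n (isotropy 𝕜 n G v) N

/-- `v` lies on an almost principal orbit. -/
def IsAlmostPrincipalPt (G : Set (Matrix (Fin n) (Fin n) 𝕜)) (v : Fin n → 𝕜) : Prop :=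
  HasClosedOrbit 𝕜 n G v ∧
    ∃ N, IsSliceComplement 𝕜 n G v N ∧ HasFiniteImageOn 𝕜 n (isotropy 𝕜 n G v) N

/-- The set of principal points `V_pr`. -/
def prPoints (G : Set (Matrix (Fin n) (Fin n) 𝕜)) : Set (Fin n → 𝕜) :=
  {v | IsPrincipalPt 𝕜 n G v}

/-- The set of almost principal points `V_apr`. -/
def aprPoints (G : Set (Matrix (Fin n) (Fin n) 𝕜)) : Set (Fin n → 𝕜) :=
  {v | IsAlmostPrincipalPt 𝕜 n G v}

/-- `π⁻¹(π(Y))`: all points that the invariants cannot separate from `Y`. -/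
def saturation (G : Set (Matrix (Fin n) (Fin n) 𝕜)) (Y : Set (Fin n → 𝕜)) :
    Set (Fin n → 𝕜) :=
  {v | ∃ y ∈ Y, ∀ p, Invariant 𝕜 n G p → eval v p = eval y p}

/-- `Y` is `G`-saturated: `Y = π⁻¹(π(Y))`. -/
def IsSaturated (G : Set (Matrix (Fin n) (Fin n) 𝕜)) (Y : Set (Fin n → 𝕜)) : Prop :=
  Y = saturation 𝕜 n G Y

/-- The fiber `π⁻¹(π(v))` of the quotient morphism. -/
def piFiber (G : Set (Matrix (Fin n) (Fin n) 𝕜)) (v : Fin n → 𝕜) : Set (Fin n → 𝕜) :=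
  {u | ∀ p, Invariant 𝕜 n G p → eval u p = eval v p}

/-- The invariant ring `𝕜[V]^G` as a subalgebra of `𝕜[V]`. -/
def invariantSubalgebra (G : Set (Matrix (Fin n) (Fin n) 𝕜)) :
    Subalgebra 𝕜 (MvPolynomial (Fin n) 𝕜) where
  carrier := {p | Invariant 𝕜 n G p}
  mul_mem' := by intro a b ha hb g hg v; simp [ha g hg v, hb g hg v]
  one_mem' := by intro g hg v; simp
  add_mem' := by intro a b ha hb g hg v; simp [ha g hg v, hb g hg v]
  zero_mem' := by intro g hg v; simp
  algebraMap_mem' := by intro r g hg v; simp [MvPolynomial.algebraMap_eq]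

/-- The representation is cofree: `𝕜[V]` is a free module over `𝕜[V]^G`. -/
def IsCofree (G : Set (Matrix (Fin n) (Fin n) 𝕜)) : Prop :=
  Module.Free ↥(invariantSubalgebra 𝕜 n G) (MvPolynomial (Fin n) 𝕜)

/-- The vanishing ideal of `π(Y)` in `𝕜[V//G] = 𝕜[V]^G`. -/
def quotVanishingIdeal (G : Set (Matrix (Fin n) (Fin n) 𝕜)) (Y : Set (Fin n → 𝕜)) :
    Ideal ↥(invariantSubalgebra 𝕜 n G) where
  carrier := {p | ∀ y ∈ Y, eval y (p : MvPolynomial (Fin n) 𝕜) = 0}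
  zero_mem' := by intro y hy; simp
  add_mem' := by intro a b ha hb y hy; simp [ha y hy, hb y hy]
  smul_mem' := by intro c p hp y hy; simp [smul_eq_mul, hp y hy]

/-- The module is stable: there is a nonempty Zariski-open set of points with closed orbit. -/
def IsStableModule (G : Set (Matrix (Fin n) (Fin n) 𝕜)) : Prop :=
  ∃ U : Set (Fin n → 𝕜), U.Nonempty ∧ IsAlgebraicSet 𝕜 n Uᶜ ∧
    ∀ v ∈ U, HasClosedOrbit 𝕜 n G v

/-- `G` is Zariski closed in `GL_n(𝕜)`. -/
def IsZClosedInGL (G : Set (Matrix (Fin n) (Fin n) 𝕜)) : Prop :=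
  ∃ P : Set (MvPolynomial (Fin n × Fin n) 𝕜),
    G = {g | IsUnit g ∧ ∀ p ∈ P, eval (fun ij => g ij.1 ij.2) p = 0}

/-- `G` is a (linearly) reductive algebraic group: a Zariski closed subgroup of `GL_n`
containing a Zariski-dense compact subgroup (the unitarian trick characterization). -/
def IsReductiveGroup (G : Set (Matrix (Fin n) (Fin n) 𝕜)) : Prop :=
  IsMatSubgroup 𝕜 n G ∧ IsZClosedInGL 𝕜 n G ∧
    ∃ K : Set (Matrix (Fin n) (Fin n) 𝕜), K ⊆ G ∧ IsCompact K ∧ IsMatSubgroup 𝕜 n K ∧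
      ∀ p : MvPolynomial (Fin n × Fin n) 𝕜,
        (∀ k ∈ K, eval (fun ij => k ij.1 ij.2) p = 0) →
          ∀ g ∈ G, eval (fun ij => g ij.1 ij.2) p = 0

/-- The isotropy groups of `v` and `w` are conjugate in `G`. -/
def ConjIsotropy (G : Set (Matrix (Fin n) (Fin n) 𝕜)) (v w : Fin n → 𝕜) : Prop :=
  ∃ g ∈ G, isotropy 𝕜 n G w = (fun h => g * h * g⁻¹) '' isotropy 𝕜 n G v

/-- The (Luna) stratum of `V` determined by a point `v` with closed orbit: the inverse image
under `π` of the set of closed orbits with isotropy group conjugate to `G_v`. -/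
def stratumOf (G : Set (Matrix (Fin n) (Fin n) 𝕜)) (v : Fin n → 𝕜) : Set (Fin n → 𝕜) :=
  {u | ∃ w, HasClosedOrbit 𝕜 n G w ∧ w ∈ zclosure 𝕜 n (orbit 𝕜 n G u) ∧
    ConjIsotropy 𝕜 n G v w}

/-- Dimension of (the Zariski closure of) a subset of `𝕜ⁿ`, as the Krull dimension of its
coordinate ring. -/
def adim (X : Set (Fin n → 𝕜)) : WithBot ℕ∞ :=
  ringKrullDim (MvPolynomial (Fin n) 𝕜 ⧸ vanishingIdeal 𝕜 n X)

/-- A nonempty algebraic set with prime vanishing ideal, i.e. an irreducible algebraic set. -/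
def IsIrredAlg (Z : Set (Fin n → 𝕜)) : Prop :=
  IsAlgebraicSet 𝕜 n Z ∧ Z.Nonempty ∧ (vanishingIdeal 𝕜 n Z).IsPrime

/-- `Z` is an irreducible component of `Y`. -/
def IsIrredComponentOf (Y Z : Set (Fin n → 𝕜)) : Prop :=
  IsIrredAlg 𝕜 n Z ∧ Z ⊆ Y ∧
    ∀ Z', IsIrredAlg 𝕜 n Z' → Z ⊆ Z' → Z' ⊆ Y → Z' = Z

/-- The rank at `v` of the differential of `f = (f_1, …, f_d) : V → 𝕜^d`. -/
def jacRank {d : ℕ} (f : Fin d → MvPolynomial (Fin n) 𝕜) (v : Fin n → 𝕜) : ℕ :=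
  (Matrix.of fun (i : Fin d) (j : Fin n) => eval v (pderiv j (f i))).rank

/-- A polynomial is `H`-invariant as a function on the submodule `N`. -/
def InvariantOn (H : Set (Matrix (Fin n) (Fin n) 𝕜)) (N : Submodule 𝕜 (Fin n → 𝕜))
    (p : MvPolynomial (Fin n) 𝕜) : Prop :=
  ∀ g ∈ H, ∀ x ∈ N, eval (Matrix.mulVec g x) p = eval x p

/-- The null cone of the `H`-module `N`: points of `N` which the `H`-invariant functions on `N`
cannot separate from `0`. -/
def sliceNullCone (H : Set (Matrix (Fin n) (Fin n) 𝕜)) (N : Submodule 𝕜 (Fin n → 𝕜)) :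
    Set (Fin n → 𝕜) :=
  {x | x ∈ N ∧ ∀ p, InvariantOn 𝕜 n H N p → eval x p = eval (0 : Fin n → 𝕜) p}

/-- The `H`-module `N` is coreduced: the vanishing ideal of its null cone in `𝕜[N]` is
generated by `H`-invariant functions.  (Stated in `𝕜[V]`: the vanishing ideal of the null
cone equals the ideal generated by the invariant functions vanishing on it together with the
vanishing ideal of `N`.) -/
def CoreducedOn (H : Set (Matrix (Fin n) (Fin n) 𝕜)) (N : Submodule 𝕜 (Fin n → 𝕜)) : Prop :=
  vanishingIdeal 𝕜 n (sliceNullCone 𝕜 n H N) =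
    Ideal.span ({p | InvariantOn 𝕜 n H N p ∧ ∀ x ∈ sliceNullCone 𝕜 n H N, eval x p = 0} ∪
      {p | ∀ x ∈ (N : Set (Fin n → 𝕜)), eval x p = 0})

/-- Complexification of a real vector. -/
def cVec (w : Fin n → ℝ) : Fin n → ℂ := fun i => (w i : ℂ)

/-- The complexification `G = K_ℂ` of a compact matrix group `K ⊆ GL_n(ℝ)`: the Zariski
closure of `K` in the complex matrices. -/
def complexifiedGroup (K : Set (Matrix (Fin n) (Fin n) ℝ)) :
    Set (Matrix (Fin n) (Fin n) ℂ) :=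
  {g | ∀ p : MvPolynomial (Fin n × Fin n) ℂ,
    (∀ k ∈ K, eval (fun ij => (k ij.1 ij.2 : ℂ)) p = 0) →
      eval (fun ij => g ij.1 ij.2) p = 0}

/-- The complexification `Y = X_ℂ ⊆ ℂⁿ` of `X ⊆ ℝⁿ`: the Zariski closure of `X` in `ℂⁿ`. -/
def complexification (X : Set (Fin n → ℝ)) : Set (Fin n → ℂ) :=
  zclosure ℂ n (cVec n '' X)

/-! ### Auxiliary machinery: real and imaginary parts of complex polynomials -/

section Aux

variable {n : ℕ}

/-- The coefficientwise complexification map `ℝ[x] →+* ℂ[x]`. -/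
noncomputable abbrev cPoly : MvPolynomial (Fin n) ℝ →+* MvPolynomial (Fin n) ℂ :=
  MvPolynomial.map (algebraMap ℝ ℂ)

/-- Real part of a complex polynomial. -/
noncomputable def reP (q : MvPolynomial (Fin n) ℂ) : MvPolynomial (Fin n) ℝ :=
  ∑ m ∈ q.support, monomial m (q.coeff m).re

/-- Imaginary part of a complex polynomial. -/
noncomputable def imP (q : MvPolynomial (Fin n) ℂ) : MvPolynomial (Fin n) ℝ :=
  ∑ m ∈ q.support, monomial m (q.coeff m).im

lemma coeff_reP (q : MvPolynomial (Fin n) ℂ) (m : Fin n →₀ ℕ) :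
    coeff m (reP q) = (q.coeff m).re := by
  classical
  rw [reP, coeff_sum]
  simp only [coeff_monomial]
  rw [Finset.sum_ite_eq' q.support m fun m => (q.coeff m).re]
  by_cases h : m ∈ q.support
  · simp [h]
  · simp [h, (MvPolynomial.notMem_support_iff).mp h]

lemma coeff_imP (q : MvPolynomial (Fin n) ℂ) (m : Fin n →₀ ℕ) :
    coeff m (imP q) = (q.coeff m).im := by
  classical
  rw [imP, coeff_sum]
  simp only [coeff_monomial]
  rw [Finset.sum_ite_eq' q.support m fun m => (q.coeff m).im]
  by_cases h : m ∈ q.support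
  · simp [h]
  · simp [h, (MvPolynomial.notMem_support_iff).mp h]

lemma reP_imP_decomp (q : MvPolynomial (Fin n) ℂ) :
    cPoly (reP q) + C Complex.I * cPoly (imP q) = q := by
  apply MvPolynomial.ext
  intro m
  simp only [coeff_add, coeff_map, coeff_C_mul, coeff_reP, coeff_imP]
  simp [Complex.ext_iff]

lemma reP_mk (a b : MvPolynomial (Fin n) ℝ) :
    reP (cPoly a + C Complex.I * cPoly b) = a := by
  apply MvPolynomial.ext
  intro m
  simp [coeff_reP, coeff_map, Complex.ext_iff]

lemma imP_mk (a b : MvPolynomial (Fin n) ℝ) :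
    imP (cPoly a + C Complex.I * cPoly b) = b := by
  apply MvPolynomial.ext
  intro m
  simp [coeff_imP, coeff_map, Complex.ext_iff]

lemma reP_cPoly (a : MvPolynomial (Fin n) ℝ) : reP (cPoly a) = a := by
  have := reP_mk a 0
  simpa using this

lemma imP_cPoly (a : MvPolynomial (Fin n) ℝ) : imP (cPoly a) = 0 := by
  have := imP_mk a 0
  simpa using this

lemma cPoly_mul_decomp (u v a b : MvPolynomial (Fin n) ℝ) :
    (cPoly u + C Complex.I * cPoly v) * (cPoly a + C Complex.I * cPoly b) =
      cPoly (u * a - v * b) + C Complex.I * cPoly (u * b + v * a) := by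
  have h : (C Complex.I : MvPolynomial (Fin n) ℂ) * C Complex.I = -1 := by
    rw [← C_mul, Complex.I_mul_I, map_neg, map_one]
  simp only [map_sub, map_add, map_mul]
  ring_nf
  linear_combination (cPoly v * cPoly b) * h

/-- Membership in the extension of a real ideal to `ℂ[x]`. -/
lemma mem_cPoly_map_iff (I : Ideal (MvPolynomial (Fin n) ℝ)) (q : MvPolynomial (Fin n) ℂ) :
    q ∈ I.map (cPoly (n := n)) ↔ reP q ∈ I ∧ imP q ∈ I := by
  constructor
  · intro hq
    rw [Ideal.map, Ideal.span] at hq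
    refine Submodule.span_induction ?_ ?_ ?_ ?_ hq
    · rintro x ⟨a, ha, rfl⟩
      constructor
      · rw [show (cPoly a : MvPolynomial (Fin n) ℂ) = cPoly a + C Complex.I * cPoly 0 by simp,
          reP_mk]; exact ha
      · rw [show (cPoly a : MvPolynomial (Fin n) ℂ) = cPoly a + C Complex.I * cPoly 0 by simp,
          imP_mk]; exact I.zero_mem
    · constructor
      · rw [show (0 : MvPolynomial (Fin n) ℂ) = cPoly 0 + C Complex.I * cPoly 0 by simp, reP_mk]
        exact I.zero_mem
      · rw [show (0 : MvPolynomial (Fin n) ℂ) = cPoly 0 + C Complex.I * cPoly 0 by simp, imP_mk]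
        exact I.zero_mem
    · rintro x y _ _ ⟨hxr, hxi⟩ ⟨hyr, hyi⟩
      constructor
      · rw [show x + y = cPoly (reP x + reP y) + C Complex.I * cPoly (imP x + imP y) by
          simp only [map_add]
          rw [show cPoly (reP x) + cPoly (reP y) + C Complex.I * (cPoly (imP x) + cPoly (imP y)) =
            (cPoly (reP x) + C Complex.I * cPoly (imP x)) +
            (cPoly (reP y) + C Complex.I * cPoly (imP y)) by ring, reP_imP_decomp, reP_imP_decomp],
          reP_mk]
        exact I.add_mem hxr hyr
      · rw [show x + y = cPoly (reP x + reP y) + C Complex.I * cPoly (imP x + imP y) by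
          simp only [map_add]
          rw [show cPoly (reP x) + cPoly (reP y) + C Complex.I * (cPoly (imP x) + cPoly (imP y)) =
            (cPoly (reP x) + C Complex.I * cPoly (imP x)) +
            (cPoly (reP y) + C Complex.I * cPoly (imP y)) by ring, reP_imP_decomp, reP_imP_decomp],
          imP_mk]
        exact I.add_mem hxi hyi
    · rintro c x _ ⟨hxr, hxi⟩
      have hdc : c • x = cPoly (reP c * reP x - imP c * imP x) +
          C Complex.I * cPoly (reP c * imP x + imP c * reP x) := by
        rw [smul_eq_mul, ← reP_imP_decomp c, ← reP_imP_decomp x, cPoly_mul_decomp]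
        congr 2
        · rw [reP_mk, imP_mk, reP_mk, imP_mk]
        · rw [reP_mk, imP_mk, reP_mk, imP_mk]
      constructor
      · rw [hdc, reP_mk]
        exact I.sub_mem (I.mul_mem_left _ hxr) (I.mul_mem_left _ hxi)
      · rw [hdc, imP_mk]
        exact I.add_mem (I.mul_mem_left _ hxi) (I.mul_mem_left _ hxr)
  · rintro ⟨hr, hi⟩
    rw [← reP_imP_decomp q]
    exact Ideal.add_mem _ (Ideal.mem_map_of_mem _ hr)
      (Ideal.mul_mem_left _ _ (Ideal.mem_map_of_mem _ hi))

lemma cPoly_map_inj {I J : Ideal (MvPolynomial (Fin n) ℝ)}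
    (h : I.map (cPoly (n := n)) = J.map (cPoly (n := n))) : I = J := by
  ext p
  constructor <;> intro hp
  · have : cPoly p ∈ J.map (cPoly (n := n)) := h ▸ Ideal.mem_map_of_mem _ hp
    obtain ⟨h1, -⟩ := (mem_cPoly_map_iff J (cPoly p)).mp this
    rwa [reP_cPoly] at h1
  · have : cPoly p ∈ I.map (cPoly (n := n)) := h ▸ Ideal.mem_map_of_mem _ hp
    obtain ⟨h1, -⟩ := (mem_cPoly_map_iff I (cPoly p)).mp this
    rwa [reP_cPoly] at h1

/-! ### Evaluation lemmas -/

lemma eval_cVec (x : Fin n → ℝ) (p : MvPolynomial (Fin n) ℝ) :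
    eval (cVec n x) (cPoly p) = ((eval x p : ℝ) : ℂ) := by
  rw [eval_map]
  have h1 : ((eval x p : ℝ) : ℂ) = (algebraMap ℝ ℂ) (eval₂ (RingHom.id ℝ) x p) := rfl
  rw [h1, eval₂_comp_left]
  congr

lemma eval_cVec_decomp (x : Fin n → ℝ) (q : MvPolynomial (Fin n) ℂ) :
    eval (cVec n x) q =
      ((eval x (reP q) : ℝ) : ℂ) + Complex.I * ((eval x (imP q) : ℝ) : ℂ) := by
  conv_lhs => rw [← reP_imP_decomp q]
  simp only [map_add, map_mul, eval_C]
  rw [eval_cVec, eval_cVec]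

lemma eval_bind₁' {R : Type*} [CommSemiring R] {σ τ : Type*}
    (w : τ → R) (g : σ → MvPolynomial τ R) (φ : MvPolynomial σ R) :
    eval w (bind₁ g φ) = eval (fun i => eval w (g i)) φ := by
  simpa using eval₂Hom_bind₁ (RingHom.id R) w g φ

/-! ### Group lemmas -/

/-- Complexification of a real matrix. -/
def cMat (k : Matrix (Fin n) (Fin n) ℝ) : Matrix (Fin n) (Fin n) ℂ :=
  fun i j => (k i j : ℂ)

lemma cMat_mem {K : Set (Matrix (Fin n) (Fin n) ℝ)} {k : Matrix (Fin n) (Fin n) ℝ}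
    (hk : k ∈ K) : cMat k ∈ complexifiedGroup n K := by
  intro p hp
  exact hp k hk

lemma mulVec_cMat_cVec (k : Matrix (Fin n) (Fin n) ℝ) (x : Fin n → ℝ) :
    Matrix.mulVec (cMat k) (cVec n x) = cVec n (Matrix.mulVec k x) := by
  funext i
  simp [Matrix.mulVec, dotProduct, cMat, cVec]

lemma cPoly_invariant_on_cK {K : Set (Matrix (Fin n) (Fin n) ℝ)}
    {p : MvPolynomial (Fin n) ℝ} (hp : Invariant ℝ n K p) :
    ∀ k ∈ K, ∀ v : Fin n → ℂ,
      eval (Matrix.mulVec (cMat k) v) (cPoly p) = eval v (cPoly p) := by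
  intro k hk v
  have hpoly : bind₁ (fun i : Fin n => ∑ j, C (k i j) * X j) p = p := by
    apply MvPolynomial.funext
    intro x
    rw [eval_bind₁']
    have : (fun i => eval x (∑ j, C (k i j) * X j)) = Matrix.mulVec k x := by
      funext i
      simp [Matrix.mulVec, dotProduct]
    rw [this]
    exact hp k hk x
  have hmap := congrArg (cPoly (n := n)) hpoly
  rw [show (cPoly (n := n) : MvPolynomial (Fin n) ℝ →+* MvPolynomial (Fin n) ℂ)
      (bind₁ (fun i : Fin n => ∑ j, C (k i j) * X j) p) =
      bind₁ (fun i : Fin n => MvPolynomial.map (algebraMap ℝ ℂ) (∑ j, C (k i j) * X j))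
        (cPoly p) from map_bind₁ _ _ _] at hmap
  conv_rhs => rw [← hmap]
  rw [eval_bind₁']
  have hv : (fun i => eval v ((MvPolynomial.map (algebraMap ℝ ℂ)) (∑ j, C (k i j) * X j))) =
      Matrix.mulVec (cMat k) v := by
    funext i
    simp [Matrix.mulVec, dotProduct, cMat]
  rw [hv]

lemma invariant_of_invariant_on_cK {K : Set (Matrix (Fin n) (Fin n) ℝ)}
    {q : MvPolynomial (Fin n) ℂ}
    (h : ∀ k ∈ K, ∀ v : Fin n → ℂ, eval (Matrix.mulVec (cMat k) v) q = eval v q) :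
    Invariant ℂ n (complexifiedGroup n K) q := by
  intro g hg v
  have key := hg (bind₁ (fun i : Fin n =>
      ∑ j, (X (i, j) : MvPolynomial (Fin n × Fin n) ℂ) * C (v j)) q - C (eval v q)) ?_
  · rw [map_sub, eval_bind₁'] at key
    have hv : (fun i => eval (fun ij => g ij.1 ij.2)
        (∑ j, (X (i, j) : MvPolynomial (Fin n × Fin n) ℂ) * C (v j))) =
        Matrix.mulVec g v := by
      funext i
      simp [Matrix.mulVec, dotProduct]
    rw [hv] at key
    simp only [eval_C] at key
    exact sub_eq_zero.mp key
  · intro k hk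
    rw [map_sub, eval_bind₁']
    have hv : (fun i => eval (fun ij => (k ij.1 ij.2 : ℂ))
        (∑ j, (X (i, j) : MvPolynomial (Fin n × Fin n) ℂ) * C (v j))) =
        Matrix.mulVec (cMat k) v := by
      funext i
      simp [Matrix.mulVec, dotProduct, cMat]
    rw [hv]
    simp only [eval_C]
    rw [h k hk v]
    ring

lemma reim_add_eq_iff (a b c d : ℝ) :
    ((a : ℂ) + Complex.I * b = (c : ℂ) + Complex.I * d) ↔ a = c ∧ b = d := by
  constructor
  · intro h
    have hre := congrArg Complex.re h
    have him := congrArg Complex.im h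
    simp at hre him
    exact ⟨hre, him⟩
  · rintro ⟨rfl, rfl⟩; rfl

lemma reim_zero_iff (a b : ℝ) :
    ((a : ℂ) + Complex.I * b = 0) ↔ a = 0 ∧ b = 0 := by
  have := reim_add_eq_iff a b 0 0
  simpa using this

lemma cVec_mem_complexification {X : Set (Fin n → ℝ)} {x : Fin n → ℝ} (hx : x ∈ X) :
    cVec n x ∈ complexification n X := by
  simp only [complexification, zclosure, zeroSet, Set.mem_setOf_eq]
  intro p hp
  exact hp _ ⟨x, hx, rfl⟩

lemma mem_vanishing_complexification_iff {X : Set (Fin n → ℝ)} (q : MvPolynomial (Fin n) ℂ) :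
    q ∈ vanishingIdeal ℂ n (complexification n X) ↔ ∀ x ∈ X, eval (cVec n x) q = 0 := by
  constructor
  · intro h x hx
    have h' : ∀ z ∈ complexification n X, eval z q = 0 := h
    exact h' _ (cVec_mem_complexification hx)
  · intro h z hz
    have hmem : q ∈ vanishingIdeal ℂ n (cVec n '' X) := by
      rintro _ ⟨x, hx, rfl⟩
      exact h x hx
    have hz' : ∀ r ∈ (vanishingIdeal ℂ n (cVec n '' X) : Set (MvPolynomial (Fin n) ℂ)),
        eval z r = 0 := hz
    exact hz' q hmem

lemma vanishing_complexification (X : Set (Fin n → ℝ)) :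
    vanishingIdeal ℂ n (complexification n X) =
      (vanishingIdeal ℝ n X).map (cPoly (n := n)) := by
  ext q
  rw [mem_vanishing_complexification_iff, mem_cPoly_map_iff]
  constructor
  · intro h
    constructor
    · intro x hx
      have hh := h x hx
      rw [eval_cVec_decomp] at hh
      exact ((reim_zero_iff _ _).mp hh).1
    · intro x hx
      have hh := h x hx
      rw [eval_cVec_decomp] at hh
      exact ((reim_zero_iff _ _).mp hh).2
  · rintro ⟨hr, hi⟩ x hx
    have hr' : ∀ x ∈ X, eval x (reP q) = 0 := hr
    have hi' : ∀ x ∈ X, eval x (imP q) = 0 := hi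
    rw [eval_cVec_decomp, hr' x hx, hi' x hx]
    simp

lemma invariantIdeal_complexification (K : Set (Matrix (Fin n) (Fin n) ℝ))
    (X : Set (Fin n → ℝ)) :
    invariantIdeal ℂ n (complexifiedGroup n K) (complexification n X) =
      (invariantIdeal ℝ n K X).map (cPoly (n := n)) := by
  apply le_antisymm
  · rw [invariantIdeal, Ideal.span_le]
    rintro q ⟨hinv, hvan⟩
    rw [SetLike.mem_coe, mem_cPoly_map_iff]
    have hreinv : Invariant ℝ n K (reP q) := by
      intro k hk x
      have hh := hinv (cMat k) (cMat_mem hk) (cVec n x)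
      rw [mulVec_cMat_cVec, eval_cVec_decomp, eval_cVec_decomp] at hh
      exact ((reim_add_eq_iff _ _ _ _).mp hh).1
    have himinv : Invariant ℝ n K (imP q) := by
      intro k hk x
      have hh := hinv (cMat k) (cMat_mem hk) (cVec n x)
      rw [mulVec_cMat_cVec, eval_cVec_decomp, eval_cVec_decomp] at hh
      exact ((reim_add_eq_iff _ _ _ _).mp hh).2
    have hrevan : ∀ x ∈ X, eval x (reP q) = 0 := by
      intro x hx
      have hh := hvan (cVec n x) (cVec_mem_complexification hx)
      rw [eval_cVec_decomp] at hh
      exact ((reim_zero_iff _ _).mp hh).1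
    have himvan : ∀ x ∈ X, eval x (imP q) = 0 := by
      intro x hx
      have hh := hvan (cVec n x) (cVec_mem_complexification hx)
      rw [eval_cVec_decomp] at hh
      exact ((reim_zero_iff _ _).mp hh).2
    exact ⟨Ideal.subset_span ⟨hreinv, hrevan⟩, Ideal.subset_span ⟨himinv, himvan⟩⟩
  · rw [invariantIdeal, invariantIdeal, Ideal.map_span, Ideal.span_le]
    rintro _ ⟨p, ⟨hpinv, hpvan⟩, rfl⟩
    rw [SetLike.mem_coe]
    apply Ideal.subset_span
    refine ⟨invariant_of_invariant_on_cK (cPoly_invariant_on_cK hpinv), ?_⟩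
    intro z hz
    have hmem : cPoly p ∈ vanishingIdeal ℂ n (cVec n '' X) := by
      rintro _ ⟨x, hx, rfl⟩
      rw [eval_cVec, hpvan x hx]
      simp
    have hz' : ∀ r ∈ (vanishingIdeal ℂ n (cVec n '' X) : Set (MvPolynomial (Fin n) ℂ)),
        eval z r = 0 := hz
    exact hz' _ hmem

end Aux

/-- **Theorem 1.3(2).** Let `K` be a compact Lie group (realized as a compact subgroup of
`GL_n(ℝ)`) and `X ⊆ W = ℝⁿ` a `K`-stable real algebraic set.  Then `X` is `K`-reduced if
and only if its complexification `Y = X_ℂ ⊆ ℂⁿ` is `G`-reduced, where `G = K_ℂ` is the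
complexification of `K`. -/
theorem K_reduced_iff_complexification_G_reduced
    (n : ℕ) (K : Set (Matrix (Fin n) (Fin n) ℝ))
    (hKgrp : IsMatSubgroup ℝ n K) (hKcpt : IsCompact K)
    (X : Set (Fin n → ℝ)) (hXalg : IsAlgebraicSet ℝ n X) (hXstab : Stabilizes ℝ n K X) :
    IsGReduced ℝ n K X ↔
      IsGReduced ℂ n (complexifiedGroup n K) (complexification n X) := by
  unfold IsGReduced
  rw [vanishing_complexification, invariantIdeal_complexification]
  constructor
  · intro h
    rw [h]
  · intro h
    exact cPoly_map_inj h

end ZPaper
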